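/- Let F be a field and W a linear subspace of F^n (coordinates indexed 0,…,n−1). Then the set L(W) = { last(v) : v ∈ W, v ≠ 0 }, where last(v) is the largest index t with v_t ≠ 0, has cardinality exactly dim W. -/

import Mathlib

/-- For a linear subspace `W` of `F^n`, the set
`L(W) = { last(v) : v ∈ W, v ≠ 0 }` of last nonzero positions of nonzero vectors of `W`
has cardinality exactly `dim W`. -/
theorem card_lastSet_eq_finrank {F : Type*} [Field F] {n : ℕ}
    (W : Submodule F (Fin n → F)) :
    Set.ncard {t : Fin n | ∃ v ∈ W, v ≠ 0 ∧ v t ≠ 0 ∧ ∀ s, t < s → v s = 0} =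
      Module.finrank F W := by
  classical
  set S := {t : Fin n | ∃ v ∈ W, v ≠ 0 ∧ v t ≠ 0 ∧ ∀ s, t < s → v s = 0} with hS
  have hchoice : ∀ t : S, ∃ w, w ∈ W ∧ w (t : Fin n) ≠ 0 ∧ ∀ s, (t : Fin n) < s → w s = 0 := by
    rintro ⟨t, v, hvW, -, hvt, hlast⟩
    exact ⟨v, hvW, hvt, hlast⟩
  choose v hvW hvt hlast using hchoice
  have hindep : LinearIndependent F v := by
    rw [linearIndependent_iff']
    intro s g hsum i hi
    by_contra hgi
    set T := s.filter (fun j => g j ≠ 0) with hT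
    have hTne : T.Nonempty := ⟨i, Finset.mem_filter.2 ⟨hi, hgi⟩⟩
    obtain ⟨m, hmT, hmax⟩ := T.exists_max_image (fun j => (j : Fin n)) hTne
    have hsum' : (∑ j ∈ s, g j • v j) (m : Fin n) = 0 := by rw [hsum]; rfl
    rw [Finset.sum_apply] at hsum'
    have key : ∑ j ∈ s, (g j • v j) (m : Fin n) = g m * v m (m : Fin n) := by
      apply Finset.sum_eq_single_of_mem m (Finset.mem_filter.1 hmT).1
      intro j hj hjm
      by_cases hgj : g j = 0
      · rw [Pi.smul_apply, hgj, zero_smul]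
      · have hjT : j ∈ T := Finset.mem_filter.2 ⟨hj, hgj⟩
        have hle : (j : Fin n) ≤ (m : Fin n) := hmax j hjT
        have hlt : (j : Fin n) < (m : Fin n) :=
          lt_of_le_of_ne hle (fun h => hjm (Subtype.ext h))
        simp [hlast j _ hlt]
    rw [key] at hsum'
    have hgm : g m ≠ 0 := (Finset.mem_filter.1 hmT).2
    rcases mul_eq_zero.1 hsum' with h | h
    · exact hgm h
    · exact hvt m h
  -- spanning
  have hspan : ∀ k : ℕ, ∀ w ∈ W, (∀ s : Fin n, k ≤ (s : ℕ) → w s = 0) →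
      w ∈ Submodule.span F (Set.range v) := by
    intro k
    induction k with
    | zero =>
      intro w _ hw
      have : w = 0 := funext fun s => hw s (Nat.zero_le _)
      simp [this]
    | succ k ih =>
      intro w hwW hw
      by_cases hk : k < n
      · set t : Fin n := ⟨k, hk⟩ with ht
        by_cases hwt : w t = 0
        · apply ih w hwW
          intro s hs
          rcases eq_or_lt_of_le hs with h | h
          · have : s = t := Fin.ext h.symm
            rw [this]; exact hwt
          · exact hw s h
        · have htS : t ∈ S := ⟨w, hwW, fun h0 => hwt (by rw [h0]; rfl), hwt,
            fun s hs => hw s hs⟩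
          set c : F := w t / v ⟨t, htS⟩ t with hc
          have hvtt : v ⟨t, htS⟩ t ≠ 0 := hvt ⟨t, htS⟩
          have hw' : w - c • v ⟨t, htS⟩ ∈ Submodule.span F (Set.range v) := by
            apply ih _ (Submodule.sub_mem W hwW (Submodule.smul_mem W c (hvW ⟨t, htS⟩)))
            intro s hs
            rcases eq_or_lt_of_le hs with h | h
            · have hst : s = t := Fin.ext h.symm
              subst hst
              simp only [Pi.sub_apply, Pi.smul_apply, smul_eq_mul, hc]
              field_simp
              ring
            · have hlt : t < s := h
              simp [hw s h, hlast ⟨t, htS⟩ s hlt]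
          have : w = (w - c • v ⟨t, htS⟩) + c • v ⟨t, htS⟩ := by abel
          rw [this]
          exact Submodule.add_mem _ hw'
            (Submodule.smul_mem _ _ (Submodule.subset_span ⟨⟨t, htS⟩, rfl⟩))
      · apply ih w hwW
        intro s hs
        exact absurd (lt_of_le_of_lt hs s.isLt) hk
  have hWspan : W = Submodule.span F (Set.range v) := by
    apply le_antisymm
    · intro w hw
      exact hspan n w hw (fun s hs => absurd s.isLt (not_lt.2 hs))
    · rw [Submodule.span_le]
      rintro _ ⟨t, rfl⟩
      exact hvW t
  have hfin : Module.finrank F W = Fintype.card S := by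
    rw [(LinearEquiv.ofEq _ _ hWspan).finrank_eq]
    exact finrank_span_eq_card hindep
  rw [hfin, ← Nat.card_coe_set_eq, Nat.card_eq_fintype_card]
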